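/- Let N ≥ 2 be an integer and let s = s(N) be the smallest positive integer such that every sequence of s units of ℤ/Nℤ contains a nonempty subsequence whose product is 1. Let P be a finite set of primes not dividing N, let y be a real number with p ≤ y for every p ∈ P, and let v = |P| and let t be an integer with v > t > s. Then the number of squarefree integers n such that every prime factor of n lies in P, n has at most t (and at least one) prime factors, and n ≡ 1 (mod N), is at least C(v,t)/C(v,s), and every such n satisfies n ≤ y^t, where C(·,·) denotes the binomial coefficient. -/

import Mathlib

lemma my_squarefree_prod_primes (S : Finset ℕ) (h : ∀ p ∈ S, p.Prime) :
    Squarefree (∏ p ∈ S, p) := by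
  classical
  induction S using Finset.induction_on with
  | empty => simp
  | @insert a S' hnot ih =>
    rw [Finset.prod_insert hnot]
    have ha : a.Prime := h a (Finset.mem_insert_self _ _)
    have hS' : ∀ p ∈ S', p.Prime := fun p hp => h p (Finset.mem_insert_of_mem hp)
    have hcop : Nat.Coprime a (∏ p ∈ S', p) := by
      apply Nat.Coprime.prod_right
      intro q hq
      exact (Nat.coprime_primes ha (hS' q hq)).2 (fun hx => hnot (hx ▸ hq))
    exact (Nat.squarefree_mul hcop).2 ⟨ha.squarefree, ih hS'⟩

lemma my_choose_add_le (a b d : ℕ) : a.choose b ≤ (a + d).choose (b + d) := by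
  induction d with
  | zero => simp
  | succ d ih =>
    calc a.choose b ≤ (a + d).choose (b + d) := ih
    _ ≤ (a + d).choose (b + d) + (a + d).choose (b + d + 1) := Nat.le_add_right _ _
    _ = (a + (d+1)).choose (b + (d+1)) := by
        rw [show a + (d+1) = (a+d)+1 by ring, show b + (d+1) = (b+d)+1 by ring,
          Nat.choose_succ_succ]

lemma my_step (N s : ℕ)
    (hstep : ∀ l : List (ZMod N)ˣ, l.length = s →
      ∃ t : List (ZMod N)ˣ, t.Sublist l ∧ t ≠ [] ∧ t.prod = 1)
    (u : ℕ → (ZMod N)ˣ) (T : Finset ℕ) (hT : s ≤ T.card) :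
    ∃ S : Finset ℕ, S ⊆ T ∧ S.Nonempty ∧ ∏ p ∈ S, u p = 1 := by
  classical
  have hlen : ((T.toList.take s).map u).length = s := by
    simp [T.length_toList, Nat.min_eq_left hT]
  obtain ⟨w, hw, hwne, hwprod⟩ := hstep _ hlen
  obtain ⟨l', hl', rfl⟩ := List.sublist_map_iff.mp hw
  have hl'T : l'.Sublist T.toList := hl'.trans (List.take_sublist _ _)
  have hnd : l'.Nodup := T.nodup_toList.sublist hl'T
  refine ⟨l'.toFinset, ?_, ?_, ?_⟩
  · intro x hx
    rw [List.mem_toFinset] at hx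
    exact Finset.mem_toList.mp (hl'T.subset hx)
  · rw [List.toFinset_nonempty_iff]
    simpa using hwne
  · rw [List.prod_toFinset u hnd, hwprod]

lemma my_extract (N s : ℕ)
    (hstep : ∀ l : List (ZMod N)ˣ, l.length = s →
      ∃ t : List (ZMod N)ˣ, t.Sublist l ∧ t ≠ [] ∧ t.prod = 1)
    (u : ℕ → (ZMod N)ˣ) :
    ∀ n (T : Finset ℕ), T.card = n → s ≤ T.card →
      ∃ S : Finset ℕ, S ⊆ T ∧ S.Nonempty ∧ (∏ p ∈ S, u p) = 1 ∧ (T \ S).card < s := by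
  classical
  intro n
  induction n using Nat.strong_induction_on with
  | _ n ih =>
    intro T hTn hsT
    obtain ⟨S₀, hS₀T, hS₀ne, hS₀prod⟩ := my_step N s hstep u T hsT
    by_cases hlt : (T \ S₀).card < s
    · exact ⟨S₀, hS₀T, hS₀ne, hS₀prod, hlt⟩
    · push_neg at hlt
      have hcard : (T \ S₀).card < n := by
        rw [← hTn, Finset.card_sdiff_of_subset hS₀T]
        have := Finset.card_pos.mpr hS₀ne
        have := Finset.card_le_card hS₀T
        omega
      obtain ⟨S₁, hS₁sub, hS₁ne, hS₁prod, hS₁lt⟩ :=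
        ih _ hcard (T \ S₀) rfl hlt
      have hdisj : Disjoint S₀ S₁ := by
        rw [Finset.disjoint_left]
        intro a haS₀ haS₁
        exact (Finset.mem_sdiff.mp (hS₁sub haS₁)).2 haS₀
      have hsd : T \ (S₀ ∪ S₁) = (T \ S₀) \ S₁ := by
        ext x; simp only [Finset.mem_sdiff, Finset.mem_union]; tauto
      refine ⟨S₀ ∪ S₁, ?_, ?_, ?_, ?_⟩
      · exact Finset.union_subset hS₀T (hS₁sub.trans (Finset.sdiff_subset))
      · exact hS₀ne.mono Finset.subset_union_left
      · rw [Finset.prod_union hdisj, hS₀prod, hS₁prod, one_mul]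
      · rwa [hsd]


/-- The counting step: with `s = s(N)` minimal so that every sequence of `s`
units of `ℤ/Nℤ` has a nonempty subsequence of product `1`, `P` a finite set of
primes not dividing `N` all at most `y`, `v = |P|` and `v > t > s`, the number
of squarefree integers `n` with all prime factors in `P`, between `1` and `t`
prime factors, and `n ≡ 1 (mod N)`, is at least `C(v,t)/C(v,s)`; moreover each
such `n` satisfies `n ≤ y^t`. -/
theorem counting_products_one_mod_N (N : ℕ) (hN : 2 ≤ N) (s : ℕ)
    (hs : IsLeast {m : ℕ | 0 < m ∧ ∀ l : List (ZMod N)ˣ, l.length = m →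
      ∃ t : List (ZMod N)ˣ, t.Sublist l ∧ t ≠ [] ∧ t.prod = 1} s)
    (P : Finset ℕ) (hP : ∀ p ∈ P, p.Prime ∧ ¬ p ∣ N)
    (y : ℝ) (hy : ∀ p ∈ P, (p : ℝ) ≤ y)
    (t : ℕ) (hts : s < t) (htv : t < P.card) :
    ((P.card.choose t : ℝ) / (P.card.choose s : ℝ) ≤
      ({n : ℕ | Squarefree n ∧ n.primeFactors ⊆ P ∧ 1 ≤ n.primeFactors.card ∧
        n.primeFactors.card ≤ t ∧ n ≡ 1 [MOD N]}.ncard : ℝ)) ∧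
    ∀ n : ℕ, Squarefree n → n.primeFactors ⊆ P → 1 ≤ n.primeFactors.card →
      n.primeFactors.card ≤ t → n ≡ 1 [MOD N] → (n : ℝ) ≤ y ^ t := by
  classical
  set v := P.card with hv
  set 𝒩 := {n : ℕ | Squarefree n ∧ n.primeFactors ⊆ P ∧ 1 ≤ n.primeFactors.card ∧
        n.primeFactors.card ≤ t ∧ n ≡ 1 [MOD N]} with h𝒩
  -- part 2 first
  have hy1 : ∀ n : ℕ, n.primeFactors ⊆ P → 1 ≤ n.primeFactors.card → 1 ≤ y := by
    intro n hsub hcard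
    obtain ⟨p, hp⟩ := Finset.card_pos.mp hcard
    have hpP := hsub hp
    have : (2 : ℝ) ≤ (p : ℝ) := by
      exact_mod_cast (hP p hpP).1.two_le
    linarith [hy p hpP]
  have part2 : ∀ n : ℕ, Squarefree n → n.primeFactors ⊆ P → 1 ≤ n.primeFactors.card →
      n.primeFactors.card ≤ t → n ≡ 1 [MOD N] → (n : ℝ) ≤ y ^ t := by
    intro n hsq hsub hc1 hct _
    have h1y : 1 ≤ y := hy1 n hsub hc1
    have hn : (n : ℝ) = ∏ p ∈ n.primeFactors, (p : ℝ) := by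
      rw [← Nat.cast_prod, Nat.prod_primeFactors_of_squarefree hsq]
    calc (n : ℝ) = ∏ p ∈ n.primeFactors, (p : ℝ) := hn
      _ ≤ ∏ _p ∈ n.primeFactors, y :=
          Finset.prod_le_prod (fun p _ => by positivity)
            (fun p hp => hy p (hsub hp))
      _ = y ^ n.primeFactors.card := Finset.prod_const y
      _ ≤ y ^ t := pow_le_pow_right₀ h1y hct
  refine ⟨?_, part2⟩
  -- setup units
  have hcop : ∀ p ∈ P, Nat.Coprime p N := fun p hp =>
    ((hP p hp).1.coprime_iff_not_dvd).mpr (hP p hp).2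
  set u : ℕ → (ZMod N)ˣ := fun p =>
    if h : Nat.Coprime p N then ZMod.unitOfCoprime p h else 1 with hu
  have huval : ∀ p ∈ P, ((u p : (ZMod N)ˣ) : ZMod N) = (p : ZMod N) := by
    intro p hp
    simp [hu, dif_pos (hcop p hp), ZMod.coe_unitOfCoprime]
  have hmod : ∀ S : Finset ℕ, S ⊆ P → (∏ p ∈ S, u p) = 1 →
      (∏ p ∈ S, p) ≡ 1 [MOD N] := by
    intro S hS h1
    have h2 : (∏ p ∈ S, ((u p : (ZMod N)ˣ) : ZMod N)) = 1 := by
      have hmp := map_prod (Units.coeHom (ZMod N)) u S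
      rw [h1] at hmp
      simpa using hmp.symm
    have h3 : ∀ p ∈ S, ((u p : (ZMod N)ˣ) : ZMod N) = (p : ZMod N) :=
      fun p hp => huval p (hS hp)
    rw [Finset.prod_congr rfl h3] at h2
    have h4 : (((∏ p ∈ S, p : ℕ) : ZMod N)) = ((1 : ℕ) : ZMod N) := by
      push_cast
      simpa using h2
    exact (ZMod.natCast_eq_natCast_iff _ _ _).mp h4
  -- choice function on t-subsets
  set A := P.powersetCard t with hA
  have key : ∀ T : Finset ℕ, ∃ S : Finset ℕ, T ∈ A →
      S ⊆ T ∧ S.Nonempty ∧ (∏ p ∈ S, u p) = 1 ∧ (T \ S).card < s := by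
    intro T
    by_cases hT : T ∈ A
    · obtain ⟨hTP, hTc⟩ := Finset.mem_powersetCard.mp hT
      obtain ⟨S, h1, h2, h3, h4⟩ := my_extract N s hs.1.2 u T.card T rfl
        (by omega)
      exact ⟨S, fun _ => ⟨h1, h2, h3, h4⟩⟩
    · exact ⟨∅, fun h => absurd h hT⟩
  choose f hf using key
  set g : Finset ℕ → ℕ := fun T => ∏ p ∈ f T, p with hg
  set I := A.image g with hI
  have hTP : ∀ T ∈ A, T ⊆ P ∧ T.card = t := fun T hT =>
    Finset.mem_powersetCard.mp hT
  have hprimes : ∀ T ∈ A, ∀ p ∈ f T, p.Prime := by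
    intro T hT p hp
    exact (hP p ((hTP T hT).1 ((hf T hT).1 hp))).1
  have hfact : ∀ T ∈ A, (g T).primeFactors = f T := by
    intro T hT
    exact Nat.primeFactors_prod (hprimes T hT)
  -- image lands in 𝒩
  have hIsub : (I : Set ℕ) ⊆ 𝒩 := by
    intro n hn
    obtain ⟨T, hT, rfl⟩ := Finset.mem_image.mp (by exact_mod_cast hn)
    obtain ⟨hfT, hfne, hfprod, _⟩ := hf T hT
    have hfP : f T ⊆ P := hfT.trans (hTP T hT).1
    refine ⟨my_squarefree_prod_primes _ (hprimes T hT), ?_, ?_, ?_, ?_⟩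
    · rw [hfact T hT]; exact hfP
    · rw [hfact T hT]; exact Finset.card_pos.mpr hfne
    · rw [hfact T hT]
      exact le_trans (Finset.card_le_card hfT) (le_of_eq (hTP T hT).2)
    · exact hmod _ hfP hfprod
  -- fiber bound
  have hfiber : ∀ n ∈ I, (A.filter (fun T => g T = n)).card ≤ v.choose s := by
    intro n hn
    obtain ⟨T₀, hT₀, hgT₀⟩ := Finset.mem_image.mp hn
    set S₀ := n.primeFactors with hS₀
    have hfT₀ : f T₀ = S₀ := by rw [hS₀, ← hgT₀, hfact T₀ hT₀]
    obtain ⟨h1, h2, h3, h4⟩ := hf T₀ hT₀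
    set k := S₀.card with hk
    have hkt : k ≤ t := by
      rw [hk, ← hfT₀]
      exact le_trans (Finset.card_le_card h1) (le_of_eq (hTP T₀ hT₀).2)
    have hSP : S₀ ⊆ P := hfT₀ ▸ (h1.trans (hTP T₀ hT₀).1)
    have hkv : k ≤ v := Finset.card_le_card hSP
    have htks : t - k < s := by
      have h4' := h4
      rw [hfT₀] at h4'
      rw [Finset.card_sdiff_of_subset (hfT₀ ▸ h1), (hTP T₀ hT₀).2] at h4'
      exact h4'
    have hcard1 : (A.filter (fun T => g T = n)).card ≤
        ((P \ S₀).powersetCard (t - k)).card := by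
      apply Finset.card_le_card_of_injOn (fun T => T \ S₀)
      · intro T hT
        rw [Finset.mem_coe, Finset.mem_filter] at hT
        obtain ⟨hTA, hgT⟩ := hT
        have hfT : f T = S₀ := by rw [hS₀, ← hgT, hfact T hTA]
        have hS₀T : S₀ ⊆ T := hfT ▸ (hf T hTA).1
        rw [Finset.mem_coe, Finset.mem_powersetCard]
        constructor
        · exact Finset.sdiff_subset_sdiff (hTP T hTA).1 (le_refl _)
        · rw [Finset.card_sdiff_of_subset hS₀T, (hTP T hTA).2]
      · intro T₁ hT₁ T₂ hT₂ heq
        rw [Finset.coe_filter, Set.mem_setOf_eq] at hT₁ hT₂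
        have hfT₁ : S₀ ⊆ T₁ := by
          rw [← show f T₁ = S₀ by rw [hS₀, ← hT₁.2, hfact T₁ hT₁.1]]
          exact (hf T₁ hT₁.1).1
        have hfT₂ : S₀ ⊆ T₂ := by
          rw [← show f T₂ = S₀ by rw [hS₀, ← hT₂.2, hfact T₂ hT₂.1]]
          exact (hf T₂ hT₂.1).1
        have := congrArg (fun X => X ∪ S₀) heq
        simpa [Finset.sdiff_union_of_subset hfT₁,
          Finset.sdiff_union_of_subset hfT₂] using this
    rw [Finset.card_powersetCard, Finset.card_sdiff_of_subset hSP] at hcard1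
    refine hcard1.trans ?_
    calc (v - k).choose (t - k)
        ≤ ((v - k) + (s - (t - k))).choose ((t - k) + (s - (t - k))) :=
          my_choose_add_le _ _ _
      _ ≤ v.choose s := by
          rw [show (t - k) + (s - (t - k)) = s by omega]
          exact Nat.choose_le_choose s (by omega)
  -- counting
  have hAcard : A.card = v.choose t := Finset.card_powersetCard _ _
  have hsum : A.card = ∑ n ∈ I, (A.filter (fun T => g T = n)).card :=
    Finset.card_eq_sum_card_fiberwise (fun T hT => Finset.mem_image_of_mem g hT)
  have hcount : v.choose t ≤ I.card * v.choose s := by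
    rw [← hAcard, hsum]
    calc ∑ n ∈ I, (A.filter (fun T => g T = n)).card
        ≤ ∑ _n ∈ I, v.choose s := Finset.sum_le_sum hfiber
      _ = I.card * v.choose s := by rw [Finset.sum_const, smul_eq_mul]
  -- finiteness of 𝒩
  have hprodP : (∏ p ∈ P, p) ≠ 0 :=
    Finset.prod_ne_zero_iff.mpr (fun p hp => (hP p hp).1.ne_zero)
  have hfin : 𝒩.Finite := by
    apply Set.Finite.subset ((∏ p ∈ P, p).divisors : Finset ℕ).finite_toSet
    intro n hn
    obtain ⟨hsq, hsub, _, _, _⟩ := hn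
    simp only [Finset.coe_sort_coe, Finset.mem_coe, Nat.mem_divisors]
    refine ⟨?_, hprodP⟩
    rw [← Nat.prod_primeFactors_of_squarefree hsq]
    exact Finset.prod_dvd_prod_of_subset _ _ _ hsub
  have hIN : I.card ≤ 𝒩.ncard := by
    rw [← Set.ncard_coe_finset]
    exact Set.ncard_le_ncard hIsub hfin
  -- conclude
  have hchs : 0 < v.choose s := Nat.choose_pos (by omega)
  rw [div_le_iff₀ (by exact_mod_cast hchs)]
  calc (v.choose t : ℝ) ≤ (I.card : ℝ) * (v.choose s : ℝ) := by exact_mod_cast hcount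
    _ ≤ (𝒩.ncard : ℝ) * (v.choose s : ℝ) := by
        apply mul_le_mul_of_nonneg_right _ (by positivity)
        exact_mod_cast hIN
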